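/- arXiv:1101.3219 — 7 statements merged into one kernel-verified Lean document; each statement's English description precedes it below -/
import Mathlib

section
/- Let X and Y be measurable spaces, r : X → Y a measurable map, and (λ^y)_{y∈Y} a kernel from Y to X (i.e. y ↦ λ^y(E) is measurable for every measurable E ⊆ X) such that for every y ∈ Y the measure λ^y is concentrated on the fiber r⁻¹{y} (i.e. λ^y(X \ r⁻¹{y}) = 0) and λ^y(X) > 0. Let μ⁰ be a measure on Y and define the measure μ on X by μ(E) = ∫_Y λ^y(E) dμ⁰(y). Then the pushforward measure r_*μ and μ⁰ are mutually absolutely continuous. -/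
open MeasureTheory ProbabilityTheory
open scoped ENNReal

/-- Lemma 2.9: the pushforward of the induced measure under `r` is mutually
absolutely continuous with `μ0`. -/
theorem stmt_0 {X Y : Type*} [MeasurableSpace X] [MeasurableSpace Y]
    (r : X → Y) (hr : Measurable r)
    (lam : Kernel Y X)
    (hconc : ∀ y, lam y ((r ⁻¹' {y})ᶜ) = 0)
    (hpos : ∀ y, 0 < lam y Set.univ)
    (μ0 : Measure Y) (μ : Measure X)
    (hμ : ∀ E : Set X, MeasurableSet E → μ E = ∫⁻ y, lam y E ∂μ0) :
    μ.map r ≪ μ0 ∧ μ0 ≪ μ.map r := by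
  have key : ∀ E : Set Y, MeasurableSet E →
      (μ.map r) E = ∫⁻ y, E.indicator (fun y => lam y Set.univ) y ∂μ0 := by
    intro E hE
    rw [Measure.map_apply hr hE, hμ _ (hr hE)]
    refine lintegral_congr fun y => ?_
    by_cases hy : y ∈ E
    · have h1 : lam y ((r ⁻¹' E)ᶜ) = 0 := by
        refine measure_mono_null ?_ (hconc y)
        intro x hx hx'
        exact hx (show r x ∈ E from (show r x = y from hx') ▸ hy)
      rw [Set.indicator_of_mem hy]
      have := measure_add_measure_compl (μ := lam y) (hr hE)
      simpa [h1] using this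
    · have h1 : lam y (r ⁻¹' E) = 0 := by
        refine measure_mono_null ?_ (hconc y)
        intro x hx hx'
        exact hy ((show r x = y from hx') ▸ (show r x ∈ E from hx))
      rw [Set.indicator_of_notMem hy, h1]
  constructor
  · refine Measure.AbsolutelyContinuous.mk fun E hE hE0 => ?_
    rw [key E hE]
    rw [lintegral_indicator hE]
    rw [Measure.restrict_eq_zero.mpr hE0]
    simp
  · refine Measure.AbsolutelyContinuous.mk fun E hE hE0 => ?_
    rw [key E hE, lintegral_indicator hE] at hE0
    have := (lintegral_eq_zero_iff (by
      exact (Kernel.measurable_coe lam MeasurableSet.univ))).mp hE0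
    by_contra h
    have : (μ0.restrict E) {y | lam y Set.univ ≠ 0} = 0 := by
      simpa [Filter.EventuallyEq, ae_iff] using this
    have hall : {y | lam y Set.univ ≠ 0} = Set.univ := by
      ext y; simpa using (hpos y).ne'
    rw [hall, Measure.restrict_apply_univ] at this
    exact h this
end

section
/- Let X be a locally compact Hausdorff topological space, Y a topological space, both equipped with their Borel σ-algebras, and r : X → Y a continuous map. Let (λ^y)_{y∈Y} be a kernel from Y to X (y ↦ λ^y(E) measurable for every Borel E) such that each λ^y is concentrated on r⁻¹{y} (λ^y(X \ r⁻¹{y}) = 0), and which is locally bounded: every x ∈ X has an open neighborhood U and a constant C > 0 with λ^y(U) ≤ C for all y ∈ Y. Let μ⁰ be a locally finite Borel measure on Y. Then the measure μ on X defined by μ(E) = ∫_Y λ^y(E) dμ⁰(y) is locally finite. -/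
open MeasureTheory ProbabilityTheory
open scoped ENNReal NNReal

/-- Lemma 2.2: the induced measure `μ(E) = ∫ λ^y(E) dμ0(y)` of a locally bounded
kernel concentrated on the fibers of a continuous map, against a locally finite
measure, is locally finite. -/
theorem stmt_2 {X Y : Type*}
    [TopologicalSpace X] [LocallyCompactSpace X] [T2Space X]
    [MeasurableSpace X] [BorelSpace X]
    [TopologicalSpace Y] [MeasurableSpace Y] [BorelSpace Y]
    (r : X → Y) (hr : Continuous r)
    (lam : Kernel Y X)
    (hconc : ∀ y, lam y ((r ⁻¹' {y})ᶜ) = 0)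
    (hlb : ∀ x : X, ∃ U : Set X, IsOpen U ∧ x ∈ U ∧
      ∃ C : ℝ≥0, 0 < C ∧ ∀ y, lam y U ≤ C)
    (μ0 : Measure Y) [IsLocallyFiniteMeasure μ0]
    (μ : Measure X)
    (hμ : ∀ E : Set X, MeasurableSet E → μ E = ∫⁻ y, lam y E ∂μ0) :
    IsLocallyFiniteMeasure μ := by
  constructor
  intro x
  obtain ⟨U, hUopen, hxU, C, hCpos, hC⟩ := hlb x
  obtain ⟨V, hVmem, hVfin⟩ := Measure.finiteAt_nhds μ0 (r x)
  obtain ⟨V', hV'sub, hV'open, hxV'⟩ := mem_nhds_iff.mp hVmem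
  refine ⟨U ∩ r ⁻¹' V', ?_, ?_⟩
  · exact (hUopen.inter (hV'open.preimage hr)).mem_nhds ⟨hxU, hxV'⟩
  · have hmeas : MeasurableSet (U ∩ r ⁻¹' V') :=
      (hUopen.inter (hV'open.preimage hr)).measurableSet
    rw [hμ _ hmeas]
    have hbound : ∀ y, lam y (U ∩ r ⁻¹' V') ≤ V'.indicator (fun _ => (C : ℝ≥0∞)) y := by
      intro y
      by_cases hy : y ∈ V'
      · simpa [Set.indicator_of_mem hy] using
          le_trans (measure_mono (Set.inter_subset_left)) (hC y)
      · rw [Set.indicator_of_notMem hy]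
        have hsub : U ∩ r ⁻¹' V' ⊆ (r ⁻¹' {y})ᶜ := by
          intro z hz hzy
          exact hy (by simpa [Set.mem_preimage, Set.mem_singleton_iff.mp hzy] using hz.2)
        simpa using le_trans (measure_mono hsub) (le_of_eq (hconc y))
    calc ∫⁻ y, lam y (U ∩ r ⁻¹' V') ∂μ0
        ≤ ∫⁻ y, V'.indicator (fun _ => (C : ℝ≥0∞)) y ∂μ0 := lintegral_mono hbound
      _ = C * μ0 V' := by
          rw [lintegral_indicator hV'open.measurableSet]
          simp [lintegral_const, Measure.restrict_apply_univ, mul_comm]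
      _ < ⊤ := ENNReal.mul_lt_top ENNReal.coe_lt_top
            (lt_of_le_of_lt (measure_mono hV'sub) hVfin)
end

section
/- Let S, G, T be locally compact second countable Hausdorff spaces, S₀ and T₀ locally compact Hausdorff spaces, and r_S : S → S₀, r_T : T → T₀ continuous maps. Let (λ_S^s)_{s∈S₀} be a family of Borel measures on S, each finite on compact sets, with λ_S^s concentrated on r_S⁻¹{s} for every s, and such that for every continuous compactly supported f : S → ℝ the function s ↦ ∫_S f dλ_S^s is continuous on S₀; let (λ_T^t)_{t∈T₀} be a family of Borel measures on T with the analogous properties with respect to r_T. Then for every continuous compactly supported F : S × G × T → ℝ, the function (s, g, t) ↦ ∫_S ∫_T F(σ, g, τ) dλ_T^t(τ) dλ_S^s(σ) is continuous and compactly supported on S₀ × G × T₀. -/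
open MeasureTheory Filter Topology Set
open scoped ENNReal NNReal

private lemma aux_unif {X Y : Type*} [TopologicalSpace X] [TopologicalSpace Y]
    {f : X × Y → ℝ} (hf : Continuous f) {K : Set Y} (hK : IsCompact K) {x₀ : X}
    (hzero : ∀ y, f (x₀, y) = 0) {δ : ℝ} (hδ : 0 < δ) :
    ∀ᶠ x in 𝓝 x₀, ∀ y ∈ K, |f (x, y)| ≤ δ := by
  apply hK.eventually_forall_of_forall_eventually (P := fun x y => |f (x, y)| ≤ δ)
  intro y hy
  have hopen : IsOpen {z : X × Y | |f z| < δ} :=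
    isOpen_lt (continuous_abs.comp hf) continuous_const
  have hmem : (x₀, y) ∈ {z : X × Y | |f z| < δ} := by simp [hzero y, hδ]
  filter_upwards [hopen.mem_nhds hmem] with z hz using le_of_lt hz

private lemma aux_bound {α : Type*} [MeasurableSpace α] {μ : Measure α} {K : Set α}
    (hKm : MeasurableSet K) (hKfin : μ K < ∞) {f : α → ℝ} {δ C : ℝ}
    (h0 : ∀ x, x ∉ K → f x = 0) (hb : ∀ x ∈ K, |f x| ≤ δ)
    (hδ : 0 ≤ δ) (hC : (μ K).toReal ≤ C) :
    |∫ x, f x ∂μ| ≤ δ * C := by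
  rw [← setIntegral_eq_integral_of_forall_compl_eq_zero h0]
  calc |∫ x in K, f x ∂μ| ≤ δ * (μ K).toReal := by
        have h := norm_setIntegral_le_of_norm_le_const (f := f) (C := δ) hKfin
          (fun x hx => by rw [Real.norm_eq_abs]; exact hb x hx)
        rwa [Real.norm_eq_abs] at h
    _ ≤ δ * C := mul_le_mul_of_nonneg_left hC hδ

/-- Proposition 4.3: continuity and compact support of the iterated integral of a
continuous compactly supported function on `S × G × T` against the continuous
systems of measures `λ_S` and `λ_T`. -/
theorem stmt_5 {S G T S₀ T₀ : Type*}
    [TopologicalSpace S] [LocallyCompactSpace S] [SecondCountableTopology S] [T2Space S]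
    [MeasurableSpace S] [BorelSpace S]
    [TopologicalSpace G] [LocallyCompactSpace G] [SecondCountableTopology G] [T2Space G]
    [TopologicalSpace T] [LocallyCompactSpace T] [SecondCountableTopology T] [T2Space T]
    [MeasurableSpace T] [BorelSpace T]
    [TopologicalSpace S₀] [LocallyCompactSpace S₀] [T2Space S₀]
    [TopologicalSpace T₀] [LocallyCompactSpace T₀] [T2Space T₀]
    (rS : S → S₀) (rT : T → T₀) (hrS : Continuous rS) (hrT : Continuous rT)
    (lamS : S₀ → Measure S) (lamT : T₀ → Measure T)
    (hSfin : ∀ s, ∀ K : Set S, IsCompact K → lamS s K < ∞)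
    (hTfin : ∀ t, ∀ K : Set T, IsCompact K → lamT t K < ∞)
    (hSconc : ∀ s, lamS s ((rS ⁻¹' {s})ᶜ) = 0)
    (hTconc : ∀ t, lamT t ((rT ⁻¹' {t})ᶜ) = 0)
    (hScont : ∀ f : S → ℝ, Continuous f → HasCompactSupport f →
      Continuous fun s => ∫ σ, f σ ∂lamS s)
    (hTcont : ∀ f : T → ℝ, Continuous f → HasCompactSupport f →
      Continuous fun t => ∫ τ, f τ ∂lamT t)
    (F : S × G × T → ℝ) (hF : Continuous F) (hFc : HasCompactSupport F) :
    Continuous (fun x : S₀ × G × T₀ =>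
      ∫ σ, ∫ τ, F (σ, x.2.1, τ) ∂lamT x.2.2 ∂lamS x.1) ∧
    HasCompactSupport (fun x : S₀ × G × T₀ =>
      ∫ σ, ∫ τ, F (σ, x.2.1, τ) ∂lamT x.2.2 ∂lamS x.1) := by
  classical
  -- Integrability of continuous compactly supported functions
  have hSint : ∀ (s : S₀) (f : S → ℝ), Continuous f → HasCompactSupport f →
      Integrable f (lamS s) := fun s f hf hfc => by
    haveI : IsFiniteMeasureOnCompacts (lamS s) := ⟨fun K hK => hSfin s K hK⟩
    exact hf.integrable_of_hasCompactSupport hfc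
  have hTint : ∀ (t : T₀) (f : T → ℝ), Continuous f → HasCompactSupport f →
      Integrable f (lamT t) := fun t f hf hfc => by
    haveI : IsFiniteMeasureOnCompacts (lamT t) := ⟨fun K hK => hTfin t K hK⟩
    exact hf.integrable_of_hasCompactSupport hfc
  -- the compact "sides" of the support of F
  set KS : Set S := Prod.fst '' tsupport F with hKSdef
  set KG : Set G := (fun z : S × G × T => z.2.1) '' tsupport F with hKGdef
  set KT : Set T := (fun z : S × G × T => z.2.2) '' tsupport F with hKTdef
  have hKSc : IsCompact KS := hFc.image continuous_fst
  have hKGc : IsCompact KG := hFc.image (continuous_fst.comp continuous_snd)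
  have hKTc : IsCompact KT := hFc.image (continuous_snd.comp continuous_snd)
  have hFS : ∀ (σ : S) (g : G) (τ : T), σ ∉ KS → F (σ, g, τ) = 0 := fun σ g τ hσ =>
    image_eq_zero_of_notMem_tsupport fun h => hσ ⟨(σ, g, τ), h, rfl⟩
  have hFG : ∀ (σ : S) (g : G) (τ : T), g ∉ KG → F (σ, g, τ) = 0 := fun σ g τ hg =>
    image_eq_zero_of_notMem_tsupport fun h => hg ⟨(σ, g, τ), h, rfl⟩
  have hFT : ∀ (σ : S) (g : G) (τ : T), τ ∉ KT → F (σ, g, τ) = 0 := fun σ g τ hτ =>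
    image_eq_zero_of_notMem_tsupport fun h => hτ ⟨(σ, g, τ), h, rfl⟩
  -- slices in τ
  have hslice_cont : ∀ (σ : S) (g : G), Continuous fun τ => F (σ, g, τ) := fun σ g =>
    hF.comp (continuous_const.prodMk (continuous_const.prodMk continuous_id))
  have hslice_supp : ∀ (σ : S) (g : G), HasCompactSupport fun τ => F (σ, g, τ) :=
    fun σ g => HasCompactSupport.intro hKTc fun τ hτ => hFT σ g τ hτ
  have hslice_int : ∀ (σ : S) (g : G) (t : T₀), Integrable (fun τ => F (σ, g, τ)) (lamT t) :=
    fun σ g t => hTint t _ (hslice_cont σ g) (hslice_supp σ g)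
  -- a uniform bound for F
  obtain ⟨C, hC⟩ := hFc.exists_bound_of_continuous hF
  -- inner integrals
  have hinner_supp0 : ∀ (g : G) (t : T₀) (σ : S), σ ∉ KS →
      ∫ τ, F (σ, g, τ) ∂lamT t = 0 := by
    intro g t σ hσ
    have h : (fun τ => F (σ, g, τ)) = fun _ => (0 : ℝ) := funext fun τ => hFS σ g τ hσ
    rw [h, integral_zero]
  have hinner_cont : ∀ (g : G) (t : T₀), Continuous fun σ => ∫ τ, F (σ, g, τ) ∂lamT t := by
    intro g t
    apply continuous_of_dominated (bound := KT.indicator fun _ => C)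
    · exact fun σ => (hslice_cont σ g).aestronglyMeasurable
    · intro σ
      filter_upwards with τ
      by_cases hτ : τ ∈ KT
      · rw [indicator_of_mem hτ]; exact hC (σ, g, τ)
      · rw [indicator_of_notMem hτ, hFT σ g τ hτ]; simp
    · exact (integrable_indicator_iff hKTc.measurableSet).2
        (integrableOn_const (hTfin t KT hKTc).ne)
    · filter_upwards with τ
      exact hF.comp (continuous_id.prodMk (continuous_const.prodMk continuous_const))
  have hinner_suppC : ∀ (g : G) (t : T₀),
      HasCompactSupport fun σ => ∫ τ, F (σ, g, τ) ∂lamT t :=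
    fun g t => HasCompactSupport.intro hKSc fun σ hσ => hinner_supp0 g t σ hσ
  have hinner_int : ∀ (g : G) (t : T₀) (s : S₀),
      Integrable (fun σ => ∫ τ, F (σ, g, τ) ∂lamT t) (lamS s) :=
    fun g t s => hSint s _ (hinner_cont g t) (hinner_suppC g t)
  -- bump functions dominating the indicators of KS, KT
  obtain ⟨φS, hφS1, -, hφSc, hφS01⟩ :=
    exists_continuous_one_zero_of_isCompact hKSc isClosed_empty (disjoint_empty _)
  obtain ⟨φT, hφT1, -, hφTc, hφT01⟩ :=
    exists_continuous_one_zero_of_isCompact hKTc isClosed_empty (disjoint_empty _)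
  have hmS_cont : Continuous fun s => ∫ σ, φS σ ∂lamS s := hScont _ φS.continuous hφSc
  have hmT_cont : Continuous fun t => ∫ τ, φT τ ∂lamT t := hTcont _ φT.continuous hφTc
  have hmS_ge : ∀ s, (lamS s KS).toReal ≤ ∫ σ, φS σ ∂lamS s := by
    intro s
    have h1 : ∫ σ, KS.indicator (fun _ => (1 : ℝ)) σ ∂lamS s = (lamS s KS).toReal := by
      rw [integral_indicator_const (1 : ℝ) hKSc.measurableSet]; simp; rfl
    rw [← h1]
    apply integral_mono
    · exact (integrable_indicator_iff hKSc.measurableSet).2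
        (integrableOn_const (hSfin s KS hKSc).ne)
    · exact hSint s _ φS.continuous hφSc
    · intro σ
      by_cases hσ : σ ∈ KS
      · rw [indicator_of_mem hσ]
        exact le_of_eq (by simpa using (hφS1 hσ).symm)
      · rw [indicator_of_notMem hσ]; exact (hφS01 σ).1
  have hmT_ge : ∀ t, (lamT t KT).toReal ≤ ∫ τ, φT τ ∂lamT t := by
    intro t
    have h1 : ∫ τ, KT.indicator (fun _ => (1 : ℝ)) τ ∂lamT t = (lamT t KT).toReal := by
      rw [integral_indicator_const (1 : ℝ) hKTc.measurableSet]; simp; rfl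
    rw [← h1]
    apply integral_mono
    · exact (integrable_indicator_iff hKTc.measurableSet).2
        (integrableOn_const (hTfin t KT hKTc).ne)
    · exact hTint t _ φT.continuous hφTc
    · intro τ
      by_cases hτ : τ ∈ KT
      · rw [indicator_of_mem hτ]
        exact le_of_eq (by simpa using (hφT1 hτ).symm)
      · rw [indicator_of_notMem hτ]; exact (hφT01 τ).1
  constructor
  · -- Continuity
    rw [continuous_iff_continuousAt]
    rintro ⟨s₀, g₀, t₀⟩
    rw [ContinuousAt, Metric.tendsto_nhds]
    intro ε hε
    set MS : ℝ := (∫ σ, φS σ ∂lamS s₀) + 1 with hMSdef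
    set MT : ℝ := (∫ τ, φT τ ∂lamT t₀) + 1 with hMTdef
    have hMS1 : 1 ≤ MS := by
      have : (0:ℝ) ≤ ∫ σ, φS σ ∂lamS s₀ := integral_nonneg fun σ => (hφS01 σ).1
      simp only [hMSdef]; linarith
    have hMT1 : 1 ≤ MT := by
      have : (0:ℝ) ≤ ∫ τ, φT τ ∂lamT t₀ := integral_nonneg fun τ => (hφT01 τ).1
      simp only [hMTdef]; linarith
    have hMS0 : (0:ℝ) < MS := lt_of_lt_of_le one_pos hMS1
    have hMT0 : (0:ℝ) < MT := lt_of_lt_of_le one_pos hMT1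
    have ES1 : ∀ᶠ s in 𝓝 s₀, (lamS s KS).toReal ≤ MS := by
      have hopen : IsOpen {s | (∫ σ, φS σ ∂lamS s) < MS} := isOpen_lt hmS_cont continuous_const
      have hmem : s₀ ∈ {s | (∫ σ, φS σ ∂lamS s) < MS} := by
        simp only [mem_setOf_eq, hMSdef]; linarith
      filter_upwards [hopen.mem_nhds hmem] with s hs
      exact le_trans (hmS_ge s) (le_of_lt hs)
    have ET1 : ∀ᶠ t in 𝓝 t₀, (lamT t KT).toReal ≤ MT := by
      have hopen : IsOpen {t | (∫ τ, φT τ ∂lamT t) < MT} := isOpen_lt hmT_cont continuous_const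
      have hmem : t₀ ∈ {t | (∫ τ, φT τ ∂lamT t) < MT} := by
        simp only [mem_setOf_eq, hMTdef]; linarith
      filter_upwards [hopen.mem_nhds hmem] with t ht
      exact le_trans (hmT_ge t) (le_of_lt ht)
    have hmT_t₀ : (lamT t₀ KT).toReal ≤ MT := le_trans (hmT_ge t₀) (by simp only [hMTdef]; linarith)
    -- term 3 : variation in s
    have ES2 : ∀ᶠ s in 𝓝 s₀,
        |(∫ σ, ∫ τ, F (σ, g₀, τ) ∂lamT t₀ ∂lamS s) -
          ∫ σ, ∫ τ, F (σ, g₀, τ) ∂lamT t₀ ∂lamS s₀| < ε / 3 := by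
      have hc := (hScont _ (hinner_cont g₀ t₀) (hinner_suppC g₀ t₀)).continuousAt (x := s₀)
      have h := Metric.tendsto_nhds.mp hc (ε / 3) (by linarith)
      filter_upwards [h] with s hs
      rw [Real.dist_eq] at hs; exact hs
    -- term 1 : variation in g
    set δg : ℝ := ε / (3 * MS * MT) with hδgdef
    have hδg0 : (0:ℝ) < δg := div_pos hε (by positivity)
    have EG : ∀ᶠ g in 𝓝 g₀, ∀ σ ∈ KS, ∀ τ ∈ KT, |F (σ, g, τ) - F (σ, g₀, τ)| ≤ δg := by
      have hcont2 : Continuous fun p : G × (S × T) =>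
          F (p.2.1, p.1, p.2.2) - F (p.2.1, g₀, p.2.2) := by
        apply Continuous.sub
        · exact hF.comp ((continuous_fst.comp continuous_snd).prodMk
            (continuous_fst.prodMk (continuous_snd.comp continuous_snd)))
        · exact hF.comp ((continuous_fst.comp continuous_snd).prodMk
            (continuous_const.prodMk (continuous_snd.comp continuous_snd)))
      have h := aux_unif hcont2 (hKSc.prod hKTc) (x₀ := g₀) (fun y => sub_self _) hδg0
      filter_upwards [h] with g hg σ hσ τ hτ
      exact hg (σ, τ) ⟨hσ, hτ⟩
    -- term 2 : variation in t, uniform in σ via an ε-net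
    set δ2 : ℝ := ε / (3 * MS) with hδ2def
    have hδ20 : (0:ℝ) < δ2 := div_pos hε (by positivity)
    set δ' : ℝ := δ2 / (3 * MT) with hδ'def
    have hδ'0 : (0:ℝ) < δ' := div_pos hδ20 (by positivity)
    have ET2 : ∀ᶠ t in 𝓝 t₀, ∀ σ : S,
        |(∫ τ, F (σ, g₀, τ) ∂lamT t) - ∫ τ, F (σ, g₀, τ) ∂lamT t₀| ≤ δ2 := by
      set U : S → Set S := fun σi => {σ | ∀ τ ∈ KT, |F (σ, g₀, τ) - F (σi, g₀, τ)| ≤ δ'}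
        with hUdef
      have hU : ∀ σi ∈ KS, U σi ∈ 𝓝 σi := by
        intro σi _
        have hcont2 : Continuous fun p : S × T => F (p.1, g₀, p.2) - F (σi, g₀, p.2) := by
          apply Continuous.sub
          · exact hF.comp (continuous_fst.prodMk (continuous_const.prodMk continuous_snd))
          · exact hF.comp (continuous_const.prodMk (continuous_const.prodMk continuous_snd))
        exact aux_unif hcont2 hKTc (x₀ := σi) (fun τ => sub_self _) hδ'0
      obtain ⟨net, hnet_mem, hnet_cover⟩ := hKSc.elim_nhds_subcover U hU
      have Enet : ∀ᶠ t in 𝓝 t₀, ∀ σi ∈ net,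
          |(∫ τ, F (σi, g₀, τ) ∂lamT t) - ∫ τ, F (σi, g₀, τ) ∂lamT t₀| ≤ δ2 / 3 := by
        rw [eventually_all_finset]
        intro σi _
        have hc := (hTcont _ (hslice_cont σi g₀) (hslice_supp σi g₀)).continuousAt (x := t₀)
        have h := Metric.tendsto_nhds.mp hc (δ2 / 3) (by linarith)
        filter_upwards [h] with t ht
        rw [Real.dist_eq] at ht; exact le_of_lt ht
      filter_upwards [ET1, Enet] with t hMt hnet σ
      by_cases hσ : σ ∈ KS
      · obtain ⟨σi, hσi_net, hσU⟩ : ∃ σi ∈ net, σ ∈ U σi := by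
          have h := hnet_cover hσ
          simpa using h
        have hab : |(∫ τ, F (σ, g₀, τ) ∂lamT t) - ∫ τ, F (σi, g₀, τ) ∂lamT t| ≤ δ' * MT := by
          rw [← integral_sub (hslice_int σ g₀ t) (hslice_int σi g₀ t)]
          exact aux_bound hKTc.measurableSet (hTfin t KT hKTc)
            (fun τ hτ => by rw [hFT σ g₀ τ hτ, hFT σi g₀ τ hτ, sub_zero])
            (fun τ hτ => hσU τ hτ) (le_of_lt hδ'0) hMt
        have hcd : |(∫ τ, F (σi, g₀, τ) ∂lamT t₀) - ∫ τ, F (σ, g₀, τ) ∂lamT t₀| ≤ δ' * MT := by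
          rw [← integral_sub (hslice_int σi g₀ t₀) (hslice_int σ g₀ t₀)]
          exact aux_bound hKTc.measurableSet (hTfin t₀ KT hKTc)
            (fun τ hτ => by rw [hFT σ g₀ τ hτ, hFT σi g₀ τ hτ, sub_zero])
            (fun τ hτ => by rw [abs_sub_comm]; exact hσU τ hτ) (le_of_lt hδ'0) hmT_t₀
        have hbc := hnet σi hσi_net
        have hδ'MT : δ' * MT = δ2 / 3 := by
          rw [hδ'def]; field_simp
        have tri1 := abs_sub_le (∫ τ, F (σ, g₀, τ) ∂lamT t) (∫ τ, F (σi, g₀, τ) ∂lamT t₀)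
          (∫ τ, F (σ, g₀, τ) ∂lamT t₀)
        have tri2 := abs_sub_le (∫ τ, F (σ, g₀, τ) ∂lamT t) (∫ τ, F (σi, g₀, τ) ∂lamT t)
          (∫ τ, F (σi, g₀, τ) ∂lamT t₀)
        rw [hδ'MT] at hab hcd
        linarith
      · rw [hinner_supp0 g₀ t σ hσ, hinner_supp0 g₀ t₀ σ hσ, sub_zero, abs_zero]
        exact le_of_lt hδ20
    -- combine the three terms
    have htend1 : Filter.Tendsto (fun x : S₀ × G × T₀ => x.1)
        (𝓝 (s₀, g₀, t₀)) (𝓝 s₀) := continuousAt_fst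
    have htend2 : Filter.Tendsto (fun x : S₀ × G × T₀ => x.2.1)
        (𝓝 (s₀, g₀, t₀)) (𝓝 g₀) := continuousAt_fst.comp continuousAt_snd
    have htend3 : Filter.Tendsto (fun x : S₀ × G × T₀ => x.2.2)
        (𝓝 (s₀, g₀, t₀)) (𝓝 t₀) := continuousAt_snd.comp continuousAt_snd
    filter_upwards [htend1.eventually ES1, htend1.eventually ES2, htend2.eventually EG,
      htend3.eventually ET1, htend3.eventually ET2] with x hxS1 hxS2 hxG hxT1 hxT2
    obtain ⟨s, g, t⟩ := x
    simp only at hxS1 hxS2 hxG hxT1 hxT2 ⊢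
    rw [Real.dist_eq]
    have T1 : |(∫ σ, ∫ τ, F (σ, g, τ) ∂lamT t ∂lamS s) -
        ∫ σ, ∫ τ, F (σ, g₀, τ) ∂lamT t ∂lamS s| ≤ ε / 3 := by
      rw [← integral_sub (hinner_int g t s) (hinner_int g₀ t s)]
      have hb : ∀ σ ∈ KS,
          |(∫ τ, F (σ, g, τ) ∂lamT t) - ∫ τ, F (σ, g₀, τ) ∂lamT t| ≤ δg * MT := by
        intro σ hσ
        rw [← integral_sub (hslice_int σ g t) (hslice_int σ g₀ t)]
        exact aux_bound hKTc.measurableSet (hTfin t KT hKTc)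
          (fun τ hτ => by rw [hFT σ g τ hτ, hFT σ g₀ τ hτ, sub_zero])
          (fun τ hτ => hxG σ hσ τ hτ) (le_of_lt hδg0) hxT1
      have h := aux_bound hKSc.measurableSet (hSfin s KS hKSc)
        (fun σ hσ => by rw [hinner_supp0 g t σ hσ, hinner_supp0 g₀ t σ hσ, sub_zero])
        hb (by positivity) hxS1
      calc |∫ σ, ((∫ τ, F (σ, g, τ) ∂lamT t) - ∫ τ, F (σ, g₀, τ) ∂lamT t) ∂lamS s|
          ≤ δg * MT * MS := h
        _ = ε / 3 := by rw [hδgdef]; field_simp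
    have T2 : |(∫ σ, ∫ τ, F (σ, g₀, τ) ∂lamT t ∂lamS s) -
        ∫ σ, ∫ τ, F (σ, g₀, τ) ∂lamT t₀ ∂lamS s| ≤ ε / 3 := by
      rw [← integral_sub (hinner_int g₀ t s) (hinner_int g₀ t₀ s)]
      have h := aux_bound hKSc.measurableSet (hSfin s KS hKSc)
        (fun σ hσ => by rw [hinner_supp0 g₀ t σ hσ, hinner_supp0 g₀ t₀ σ hσ, sub_zero])
        (fun σ _ => hxT2 σ) (le_of_lt hδ20) hxS1
      calc |∫ σ, ((∫ τ, F (σ, g₀, τ) ∂lamT t) - ∫ τ, F (σ, g₀, τ) ∂lamT t₀) ∂lamS s|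
          ≤ δ2 * MS := h
        _ = ε / 3 := by rw [hδ2def]; field_simp
    have tri1 := abs_sub_le (∫ σ, ∫ τ, F (σ, g, τ) ∂lamT t ∂lamS s)
      (∫ σ, ∫ τ, F (σ, g₀, τ) ∂lamT t₀ ∂lamS s)
      (∫ σ, ∫ τ, F (σ, g₀, τ) ∂lamT t₀ ∂lamS s₀)
    have tri2 := abs_sub_le (∫ σ, ∫ τ, F (σ, g, τ) ∂lamT t ∂lamS s)
      (∫ σ, ∫ τ, F (σ, g₀, τ) ∂lamT t ∂lamS s)
      (∫ σ, ∫ τ, F (σ, g₀, τ) ∂lamT t₀ ∂lamS s)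
    linarith
  · -- Compact support
    apply HasCompactSupport.intro ((hKSc.image hrS).prod (hKGc.prod (hKTc.image hrT)))
    rintro ⟨s, g, t⟩ hx
    have hx' : ¬(s ∈ rS '' KS ∧ g ∈ KG ∧ t ∈ rT '' KT) := by
      simpa [Set.mem_prod] using hx
    by_cases hg : g ∈ KG
    · by_cases ht : t ∈ rT '' KT
      · have hs : s ∉ rS '' KS := fun h => hx' ⟨h, hg, ht⟩
        simp only
        apply integral_eq_zero_of_ae
        rw [Filter.EventuallyEq, ae_iff]
        apply measure_mono_null _ (hSconc s)
        intro σ hσ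
        simp only [mem_setOf_eq] at hσ
        intro (hmem : rS σ ∈ ({s} : Set S₀))
        apply hσ
        have hσKS : σ ∉ KS := fun hσKS => hs ⟨σ, hσKS, by simpa using hmem⟩
        simp [hinner_supp0 g t σ hσKS]
      · simp only
        have hz : ∀ σ : S, ∫ τ, F (σ, g, τ) ∂lamT t = 0 := by
          intro σ
          apply integral_eq_zero_of_ae
          rw [Filter.EventuallyEq, ae_iff]
          apply measure_mono_null _ (hTconc t)
          intro τ hτ
          simp only [mem_setOf_eq] at hτ
          intro (hmem : rT τ ∈ ({t} : Set T₀))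
          apply hτ
          by_contra hne
          have hτsupp : (σ, g, τ) ∈ tsupport F := subset_tsupport F (by
            simp only [Function.mem_support]
            intro h0
            exact hne (by simp [h0]))
          exact ht ⟨τ, ⟨(σ, g, τ), hτsupp, rfl⟩, by simpa using hmem⟩
        simp [hz]
    · simp only
      have hz : ∀ σ : S, ∫ τ, F (σ, g, τ) ∂lamT t = 0 := by
        intro σ
        have h : (fun τ => F (σ, g, τ)) = fun _ => (0 : ℝ) := funext fun τ => hFG σ g τ hg
        rw [h, integral_zero]
      simp [hz]
end

section
/- Let S, S₀, G, G₀ be measurable spaces with measurable maps r_S : S → S₀, p : S₀ → G₀ and r_G : G → G₀. Let λ_S be an s-finite kernel from S₀ to S with λ_S^s concentrated on r_S⁻¹{s} for every s; let γ_p be an s-finite kernel from G₀ to S₀ with γ_p^u concentrated on p⁻¹{u} for every u; and let λ_G be an s-finite kernel from G₀ to G with λ_G^u concentrated on r_G⁻¹{u} for every u. Then for every measurable function f : G × S → [0, ∞] and every u ∈ G₀: ∫_{S₀} ∫_S ∫_G f(y, σ) dλ_G^{p(r_S(σ))}(y) dλ_S^s(σ) dγ_p^u(s) = ∫_G ∫_{S₀}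 ∫_S f(y, σ) dλ_S^s(σ) dγ_p^{r_G(y)}(s) dλ_G^u(y). -/
open MeasureTheory ProbabilityTheory
open scoped ENNReal

/-- Lemma 5.8 (commuting triple integrals). -/
theorem stmt_11 {S S₀ G G₀ : Type*}
    [MeasurableSpace S] [MeasurableSpace S₀] [MeasurableSpace G] [MeasurableSpace G₀]
    (rS : S → S₀) (p : S₀ → G₀) (rG : G → G₀)
    (hrS : Measurable rS) (hp : Measurable p) (hrG : Measurable rG)
    (lamS : Kernel S₀ S) [IsSFiniteKernel lamS]
    (hlamS : ∀ s, lamS s ((rS ⁻¹' {s})ᶜ) = 0)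
    (γp : Kernel G₀ S₀) [IsSFiniteKernel γp]
    (hγp : ∀ u, γp u ((p ⁻¹' {u})ᶜ) = 0)
    (lamG : Kernel G₀ G) [IsSFiniteKernel lamG]
    (hlamG : ∀ u, lamG u ((rG ⁻¹' {u})ᶜ) = 0)
    (f : G × S → ℝ≥0∞) (hf : Measurable f) (u : G₀) :
    ∫⁻ s, ∫⁻ σ, ∫⁻ y, f (y, σ) ∂lamG (p (rS σ)) ∂lamS s ∂γp u
      = ∫⁻ y, ∫⁻ s, ∫⁻ σ, f (y, σ) ∂lamS s ∂γp (rG y) ∂lamG u := by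
  have hF : Measurable fun σ => ∫⁻ y, f (y, σ) ∂lamG u := by
    exact Measurable.lintegral_prod_left hf
  -- Step 1: LHS with constant index u
  have h1 : ∫⁻ s, ∫⁻ σ, ∫⁻ y, f (y, σ) ∂lamG (p (rS σ)) ∂lamS s ∂γp u
      = ∫⁻ σ, ∫⁻ y, f (y, σ) ∂lamG u ∂(lamS ∘ₖ γp) u := by
    rw [Kernel.lintegral_comp _ _ _ hF]
    refine lintegral_congr_ae ?_
    have hps : ∀ᵐ s ∂γp u, p s = u := by
      rw [ae_iff]; exact hγp u
    filter_upwards [hps] with s hs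
    refine lintegral_congr_ae ?_
    have hrs : ∀ᵐ σ ∂lamS s, rS σ = s := by
      rw [ae_iff]; exact hlamS s
    filter_upwards [hrs] with σ hσ
    rw [hσ, hs]
  -- Step 2: RHS with constant index u
  have h2 : ∫⁻ y, ∫⁻ s, ∫⁻ σ, f (y, σ) ∂lamS s ∂γp (rG y) ∂lamG u
      = ∫⁻ y, ∫⁻ σ, f (y, σ) ∂(lamS ∘ₖ γp) u ∂lamG u := by
    refine lintegral_congr_ae ?_
    have hry : ∀ᵐ y ∂lamG u, rG y = u := by
      rw [ae_iff]; exact hlamG u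
    filter_upwards [hry] with y hy
    rw [hy, Kernel.lintegral_comp _ _ _ (by fun_prop)]
  rw [h1, h2]
  exact lintegral_lintegral_swap (by fun_prop)
end

section
/- In the setting of measurable spaces S, S₀, T, T₀, G, G₀ with measurable maps r_S : S → S₀, r_T : T → T₀, r, d : G → G₀, p : S₀ → G₀, q : T₀ → G₀, and s-finite kernels λ_S, λ_T, λ_G, γ_p, γ_q concentrated respectively on the fibers of r_S, r_T, r, p, q, let μ_G⁰ be a measure on G₀ and define μ_G = ∫ λ_G^u dμ_G⁰(u), μ_P⁰ = ∫_G (γ_p^{r(x)} ⊗ δ_x ⊗ γ_q^{d(x)}) dμ_G(x), μ_P = ∫ (λ_S^s ⊗ δ_g ⊗ λ_T^t) dμ_P⁰(s,g,t), μ_S⁰ = ∫ γ_p^u dμ_G⁰(u) and μ_S = ∫ λ_S^s dμ_S⁰(s). Assume moreover that λ_T^t(T) > 0 for every t ∈ T₀, γ_q^v(T₀) > 0 for every v ∈ G₀, and λ_G^u(G) > 0 for every u ∈ G₀. Then the pushforward of μ_P under the projection π_S : S × G × T → S, π_S(σ, x, τ) = σ, is mutually absolutely continuous with μ_S. -/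
open MeasureTheory ProbabilityTheory
open scoped ENNReal

/-- Proposition 6.2 (π_S-half): the projection `π_S : P → S` of the weak pullback
is measure class preserving, `(π_S)_*(μ_P) ∼ μ_S`. -/
theorem stmt_13 {S S₀ T T₀ G G₀ : Type*}
    [MeasurableSpace S] [MeasurableSpace S₀] [MeasurableSpace T] [MeasurableSpace T₀]
    [MeasurableSpace G] [MeasurableSpace G₀]
    (rS : S → S₀) (rT : T → T₀) (r d : G → G₀) (p : S₀ → G₀) (q : T₀ → G₀)
    (hrS : Measurable rS) (hrT : Measurable rT) (hr : Measurable r) (hd : Measurable d)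
    (hp : Measurable p) (hq : Measurable q)
    (lamS : Kernel S₀ S) (lamT : Kernel T₀ T) (lamG : Kernel G₀ G)
    (γp : Kernel G₀ S₀) (γq : Kernel G₀ T₀)
    [IsSFiniteKernel lamS] [IsSFiniteKernel lamT] [IsSFiniteKernel lamG]
    [IsSFiniteKernel γp] [IsSFiniteKernel γq]
    (hlamS : ∀ s, lamS s ((rS ⁻¹' {s})ᶜ) = 0)
    (hlamT : ∀ t, lamT t ((rT ⁻¹' {t})ᶜ) = 0)
    (hlamG : ∀ u, lamG u ((r ⁻¹' {u})ᶜ) = 0)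
    (hγp : ∀ u, γp u ((p ⁻¹' {u})ᶜ) = 0)
    (hγq : ∀ u, γq u ((q ⁻¹' {u})ᶜ) = 0)
    (μG0 : Measure G₀) (μG : Measure G)
    (μP0 : Measure (S₀ × G × T₀)) (μP : Measure (S × G × T))
    (μS0 : Measure S₀) (μS : Measure S)
    (hμG : ∀ E : Set G, MeasurableSet E → μG E = ∫⁻ u, lamG u E ∂μG0)
    (hμP0 : ∀ E : Set (S₀ × G × T₀), MeasurableSet E →
      μP0 E = ∫⁻ x, ((γp (r x)).prod ((Measure.dirac x).prod (γq (d x)))) E ∂μG)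
    (hμP : ∀ E : Set (S × G × T), MeasurableSet E →
      μP E = ∫⁻ w, ((lamS w.1).prod ((Measure.dirac w.2.1).prod (lamT w.2.2))) E ∂μP0)
    (hμS0 : ∀ E : Set S₀, MeasurableSet E → μS0 E = ∫⁻ u, γp u E ∂μG0)
    (hμS : ∀ E : Set S, MeasurableSet E → μS E = ∫⁻ s, lamS s E ∂μS0)
    (hTpos : ∀ t, 0 < lamT t Set.univ)
    (hγqpos : ∀ v, 0 < γq v Set.univ)
    (hGpos : ∀ u, 0 < lamG u Set.univ) :
    μP.map (fun z : S × G × T => z.1) ≪ μS ∧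
    μS ≪ μP.map (fun z : S × G × T => z.1) := by
  classical
  -- auxiliary kernels
  set κ : Kernel G (S₀ × G × T₀) :=
    (γp.comap r hr) ×ₖ ((Kernel.deterministic id measurable_id) ×ₖ (γq.comap d hd)) with hκ
  have hκ_apply : ∀ x : G,
      κ x = (γp (r x)).prod ((Measure.dirac x).prod (γq (d x))) := by
    intro x
    rw [hκ, Kernel.prod_apply, Kernel.prod_apply, Kernel.comap_apply, Kernel.comap_apply,
      Kernel.deterministic_apply]
    rfl
  -- bind representations
  have hμP0_bind : μP0 = μG.bind (fun x => κ x) := by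
    ext A hA
    rw [Measure.bind_apply hA κ.measurable.aemeasurable, hμP0 A hA]
    exact lintegral_congr fun x => by rw [hκ_apply]
  have hμG_bind : μG = μG0.bind (fun u => lamG u) := by
    ext A hA
    rw [Measure.bind_apply hA lamG.measurable.aemeasurable, hμG A hA]
  have hμS0_bind : μS0 = μG0.bind (fun u => γp u) := by
    ext A hA
    rw [Measure.bind_apply hA γp.measurable.aemeasurable, hμS0 A hA]
  -- the mass functions
  set w0 : G₀ → ℝ≥0∞ := fun v => ∫⁻ t, lamT t Set.univ ∂γq v with hw0
  have hw0_meas : Measurable w0 := by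
    apply Measurable.lintegral_kernel_prod_right' (κ := γq)
      (f := fun z : G₀ × T₀ => lamT z.2 Set.univ)
    exact (lamT.measurable_coe MeasurableSet.univ).comp measurable_snd
  have hw0_pos : ∀ v, 0 < w0 v := by
    intro v
    rw [hw0]
    rw [lintegral_pos_iff_support (lamT.measurable_coe MeasurableSet.univ)]
    have : Function.support (fun t => lamT t Set.univ) = Set.univ :=
      Set.eq_univ_of_forall fun t => (hTpos t).ne'
    rw [this]
    exact hγqpos v
  set W : G₀ → ℝ≥0∞ := fun u => ∫⁻ x, w0 (d x) ∂lamG u with hW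
  have hW_meas : Measurable W := by
    apply Measurable.lintegral_kernel_prod_right' (κ := lamG)
      (f := fun z : G₀ × G => w0 (d z.2))
    exact hw0_meas.comp (hd.comp measurable_snd)
  have hW_pos : ∀ u, 0 < W u := by
    intro u
    show 0 < ∫⁻ x, w0 (d x) ∂lamG u
    have hm : Measurable fun x => w0 (d x) := hw0_meas.comp hd
    rw [lintegral_pos_iff_support hm]
    have : Function.support (fun x => w0 (d x)) = Set.univ :=
      Set.eq_univ_of_forall fun x => (hw0_pos (d x)).ne'
    rw [this]
    exact hGpos u
  -- the key computation, for every measurable E ⊆ S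
  have key : ∀ E : Set S, MeasurableSet E →
      (μP.map (fun z : S × G × T => z.1) E = 0 ↔ μS E = 0) := by
    intro E hE
    set F : G₀ → ℝ≥0∞ := fun u => ∫⁻ s, lamS s E ∂γp u with hFdef
    have hlamSE : Measurable fun s => lamS s E := lamS.measurable_coe hE
    have hF_meas : Measurable F := by
      apply Measurable.lintegral_kernel_prod_right' (κ := γp)
        (f := fun z : G₀ × S₀ => lamS z.2 E)
      exact hlamSE.comp measurable_snd
    -- μS E
    have hSE : μS E = ∫⁻ u, F u ∂μG0 := by
      rw [hμS E hE, hμS0_bind, Measure.lintegral_bind γp.measurable.aemeasurable hlamSE.aemeasurable]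
    -- the pushforward
    have hprod : ∀ w : S₀ × G × T₀,
        ((lamS w.1).prod ((Measure.dirac w.2.1).prod (lamT w.2.2))) (E ×ˢ Set.univ)
          = lamS w.1 E * lamT w.2.2 Set.univ := by
      intro w
      rw [Measure.prod_prod, ← Set.univ_prod_univ, Measure.prod_prod]
      simp
    have hmapE : μP.map (fun z : S × G × T => z.1) E
        = ∫⁻ u, F u * W u ∂μG0 := by
      rw [Measure.map_apply measurable_fst hE]
      have hpre : (fun z : S × G × T => z.1) ⁻¹' E = E ×ˢ (Set.univ : Set (G × T)) :=
        (Set.prod_univ).symm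
      rw [hpre, hμP _ (hE.prod MeasurableSet.univ)]
      have h1 : ∫⁻ w, ((lamS w.1).prod ((Measure.dirac w.2.1).prod (lamT w.2.2)))
          (E ×ˢ Set.univ) ∂μP0 = ∫⁻ w : S₀ × G × T₀, lamS w.1 E * lamT w.2.2 Set.univ ∂μP0 :=
        lintegral_congr fun w => hprod w
      rw [h1, hμP0_bind]
      have hg_meas : Measurable fun w : S₀ × G × T₀ => lamS w.1 E * lamT w.2.2 Set.univ :=
        (hlamSE.comp measurable_fst).mul
          ((lamT.measurable_coe MeasurableSet.univ).comp (measurable_snd.comp measurable_snd))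
      rw [Measure.lintegral_bind κ.measurable.aemeasurable hg_meas.aemeasurable]
      have h2 : ∀ x : G, ∫⁻ w : S₀ × G × T₀, lamS w.1 E * lamT w.2.2 Set.univ ∂κ x
          = F (r x) * w0 (d x) := by
        intro x
        rw [hκ_apply x]
        rw [lintegral_prod _ hg_meas.aemeasurable]
        have inner : ∀ s : S₀,
            ∫⁻ y : G × T₀, lamS s E * lamT y.2 Set.univ ∂((Measure.dirac x).prod (γq (d x)))
              = lamS s E * w0 (d x) := by
          intro s
          have hm1 : Measurable fun y : G × T₀ => lamS s E * lamT y.2 Set.univ :=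
            measurable_const.mul ((lamT.measurable_coe MeasurableSet.univ).comp measurable_snd)
          rw [lintegral_prod _ hm1.aemeasurable]
          rw [lintegral_dirac' _ hm1.lintegral_prod_right']
          rw [lintegral_const_mul _ (lamT.measurable_coe MeasurableSet.univ)]
        calc ∫⁻ s, ∫⁻ y : G × T₀, lamS s E * lamT y.2 Set.univ
              ∂((Measure.dirac x).prod (γq (d x))) ∂γp (r x)
            = ∫⁻ s, lamS s E * w0 (d x) ∂γp (r x) := lintegral_congr fun s => inner s
          _ = (∫⁻ s, lamS s E ∂γp (r x)) * w0 (d x) := lintegral_mul_const _ hlamSE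
          _ = F (r x) * w0 (d x) := rfl
      have h3 : ∫⁻ x, ∫⁻ w : S₀ × G × T₀, lamS w.1 E * lamT w.2.2 Set.univ ∂κ x ∂μG
          = ∫⁻ x, F (r x) * w0 (d x) ∂μG := lintegral_congr fun x => h2 x
      have hfx : Measurable fun x => F (r x) * w0 (d x) :=
        (hF_meas.comp hr).mul (hw0_meas.comp hd)
      rw [h3, hμG_bind, Measure.lintegral_bind lamG.measurable.aemeasurable hfx.aemeasurable]
      refine lintegral_congr fun u => ?_
      have hae : ∀ᵐ x ∂lamG u, r x = u := by
        rw [Filter.eventually_iff, mem_ae_iff]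
        have : {x : G | r x = u}ᶜ = (r ⁻¹' {u})ᶜ := by ext x; simp
        rw [this]; exact hlamG u
      calc ∫⁻ x, F (r x) * w0 (d x) ∂lamG u
          = ∫⁻ x, F u * w0 (d x) ∂lamG u := by
            refine lintegral_congr_ae ?_
            filter_upwards [hae] with x hx
            rw [hx]
        _ = F u * ∫⁻ x, w0 (d x) ∂lamG u :=
            lintegral_const_mul _ (hw0_meas.comp hd)
        _ = F u * W u := rfl
    -- conclude the equivalence
    rw [hmapE, hSE, lintegral_eq_zero_iff (f := fun u => F u * W u) (hF_meas.mul hW_meas),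
      lintegral_eq_zero_iff hF_meas]
    constructor
    · intro h
      filter_upwards [h] with u hu
      rcases mul_eq_zero.1 hu with h' | h'
      · exact h'
      · exact absurd h' (hW_pos u).ne'
    · intro h
      filter_upwards [h] with u hu
      simp [Pi.zero_apply] at hu ⊢
      exact Or.inl hu
  constructor
  · exact Measure.AbsolutelyContinuous.mk fun E hE hE0 => ((key E hE).2 hE0)
  · exact Measure.AbsolutelyContinuous.mk fun E hE hE0 => ((key E hE).1 hE0)
end

section
/- Let S₀, T₀, G, G₀ be topological spaces with their Borel σ-algebras and Borel maps p : S₀ → G₀, q : T₀ → G₀, r, d : G → G₀. Let γ_p (from G₀ to S₀), γ_q (from G₀ to T₀) and λ_G (from G₀ to G) be s-finite kernels, with γ_p^u concentrated on p⁻¹{u}, γ_q^u concentrated on q⁻¹{u} and λ_G^u concentrated on r⁻¹{u} for every u, and with γ_q and λ_G locally bounded (every point of the target space has an open neighborhood U and a constant C such that the kernel measure of U is at most C for all parameters u ∈ G₀). Let μ_G⁰ be a measure on G₀ and set μ_G = ∫ λ_G^u dμ_G⁰(u), μ_S⁰ = ∫ γ_p^u dμ_G⁰(u), and μ_P⁰(E)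 = ∫_G (γ_p^{r(x)} ⊗ δ_x ⊗ γ_q^{d(x)})(E) dμ_G(x) on S₀ × G × T₀. Then for every compact set K ⊆ S₀ × G × T₀ there exists a constant C_K ≥ 0 such that for every Borel set Σ ⊆ S₀: μ_P⁰(K ∩ (Σ × G × T₀)) ≤ C_K · μ_S⁰(Σ). -/
open MeasureTheory ProbabilityTheory Set
open scoped ENNReal NNReal

lemma aux_cover {X G₀ : Type*} [TopologicalSpace X] [MeasurableSpace G₀] [MeasurableSpace X]
    (κ : Kernel G₀ X)
    (hlb : ∀ x : X, ∃ U : Set X, IsOpen U ∧ x ∈ U ∧ ∃ C : ℝ≥0, ∀ u, κ u U ≤ C)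
    {K : Set X} (hK : IsCompact K) :
    ∃ V : Set X, IsOpen V ∧ K ⊆ V ∧ ∃ C : ℝ≥0, ∀ u, κ u V ≤ C := by
  choose U hUo hxU C hC using hlb
  obtain ⟨t, ht⟩ := hK.elim_finite_subcover U hUo (fun x _ => mem_iUnion.2 ⟨x, hxU x⟩)
  refine ⟨⋃ x ∈ t, U x, isOpen_biUnion fun x _ => hUo x, ht, ∑ x ∈ t, C x, fun u => ?_⟩
  calc κ u (⋃ x ∈ t, U x) ≤ ∑ x ∈ t, κ u (U x) := measure_biUnion_finset_le t U
    _ ≤ ∑ x ∈ t, (C x : ℝ≥0∞) := Finset.sum_le_sum fun x _ => hC x u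
    _ = ((∑ x ∈ t, C x : ℝ≥0) : ℝ≥0∞) := (ENNReal.coe_finset_sum _ _).symm

/-- Proposition 6.4 (π_S-half): the domination inequality
`μ_P⁰(K ∩ π_S⁻¹(Σ)) ≤ C_K μ_S⁰(Σ)` for compact `K` and Borel `Σ`. -/
theorem stmt_15 {S₀ T₀ G G₀ : Type*}
    [TopologicalSpace S₀] [MeasurableSpace S₀] [BorelSpace S₀]
    [TopologicalSpace T₀] [MeasurableSpace T₀] [BorelSpace T₀]
    [TopologicalSpace G] [MeasurableSpace G] [BorelSpace G]
    [TopologicalSpace G₀] [MeasurableSpace G₀] [BorelSpace G₀]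
    (p : S₀ → G₀) (q : T₀ → G₀) (r d : G → G₀)
    (hp : Measurable p) (hq : Measurable q) (hr : Measurable r) (hd : Measurable d)
    (γp : Kernel G₀ S₀) (γq : Kernel G₀ T₀) (lamG : Kernel G₀ G)
    [IsSFiniteKernel γp] [IsSFiniteKernel γq] [IsSFiniteKernel lamG]
    (hγp : ∀ u, γp u ((p ⁻¹' {u})ᶜ) = 0)
    (hγq : ∀ u, γq u ((q ⁻¹' {u})ᶜ) = 0)
    (hlamG : ∀ u, lamG u ((r ⁻¹' {u})ᶜ) = 0)
    (hγqlb : ∀ t : T₀, ∃ U : Set T₀, IsOpen U ∧ t ∈ U ∧ ∃ C : ℝ≥0, ∀ u, γq u U ≤ C)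
    (hlamGlb : ∀ x : G, ∃ U : Set G, IsOpen U ∧ x ∈ U ∧ ∃ C : ℝ≥0, ∀ u, lamG u U ≤ C)
    (μG0 : Measure G₀) (μG : Measure G) (μS0 : Measure S₀)
    (μP0 : Measure (S₀ × G × T₀))
    (hμG : ∀ E : Set G, MeasurableSet E → μG E = ∫⁻ u, lamG u E ∂μG0)
    (hμS0 : ∀ E : Set S₀, MeasurableSet E → μS0 E = ∫⁻ u, γp u E ∂μG0)
    (hμP0 : ∀ E : Set (S₀ × G × T₀), MeasurableSet E →
      μP0 E = ∫⁻ x, ((γp (r x)).prod ((Measure.dirac x).prod (γq (d x)))) E ∂μG) :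
    ∀ K : Set (S₀ × G × T₀), IsCompact K → ∃ C : ℝ≥0,
      ∀ A : Set S₀, MeasurableSet A →
        μP0 (K ∩ (A ×ˢ ((univ : Set G) ×ˢ (univ : Set T₀)))) ≤ C * μS0 A := by
  intro K hK
  obtain ⟨V, hVo, hKV, Cl, hCl⟩ :=
    aux_cover lamG hlamGlb (hK.image (continuous_fst.comp continuous_snd))
  obtain ⟨W, hWo, hKW, Cq, hCq⟩ :=
    aux_cover γq hγqlb (hK.image (continuous_snd.comp continuous_snd))
  have hV := hVo.measurableSet
  have hW := hWo.measurableSet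
  refine ⟨Cl * Cq, fun A hA => ?_⟩
  have hsub : K ∩ (A ×ˢ ((univ : Set G) ×ˢ (univ : Set T₀))) ⊆ A ×ˢ V ×ˢ W := by
    rintro ⟨s, x, t⟩ ⟨hzK, hzA, -⟩
    exact ⟨hzA, hKV ⟨_, hzK, rfl⟩, hKW ⟨_, hzK, rfl⟩⟩
  have hAVW : MeasurableSet (A ×ˢ V ×ˢ W) := hA.prod (hV.prod hW)
  have hg : Measurable fun x : G => γp (r x) A * V.indicator (fun _ => (Cq : ℝ≥0∞)) x :=
    ((γp.measurable_coe hA).comp hr).mul (measurable_const.indicator hV)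
  have hbind : μG = μG0.bind (fun u => lamG u) :=
    Measure.ext fun E hE => by
      rw [hμG E hE, Measure.bind_apply hE (Kernel.measurable lamG).aemeasurable]
  calc μP0 (K ∩ (A ×ˢ ((univ : Set G) ×ˢ (univ : Set T₀))))
      ≤ μP0 (A ×ˢ V ×ˢ W) := measure_mono hsub
    _ = ∫⁻ x, ((γp (r x)).prod ((Measure.dirac x).prod (γq (d x)))) (A ×ˢ V ×ˢ W) ∂μG :=
        hμP0 _ hAVW
    _ ≤ ∫⁻ x, γp (r x) A * V.indicator (fun _ => (Cq : ℝ≥0∞)) x ∂μG := by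
        refine lintegral_mono fun x => ?_
        rw [Measure.prod_prod, Measure.prod_prod, Measure.dirac_apply' _ hV]
        by_cases hx : x ∈ V
        · simp only [Set.indicator_of_mem hx, Pi.one_apply, one_mul]
          exact mul_le_mul_right (hCq (d x)) _
        · simp [Set.indicator_of_notMem hx]
    _ = ∫⁻ u, ∫⁻ x, γp (r x) A * V.indicator (fun _ => (Cq : ℝ≥0∞)) x ∂(lamG u) ∂μG0 := by
        rw [hbind, Measure.lintegral_bind (Kernel.measurable lamG).aemeasurable hg.aemeasurable]
    _ ≤ ∫⁻ u, γp u A * (Cq * Cl) ∂μG0 := by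
        refine lintegral_mono fun u => ?_
        have hae : ∀ᵐ x ∂(lamG u), r x = u := by
          rw [ae_iff]
          exact hlamG u
        calc ∫⁻ x, γp (r x) A * V.indicator (fun _ => (Cq : ℝ≥0∞)) x ∂(lamG u)
            = ∫⁻ x, γp u A * V.indicator (fun _ => (Cq : ℝ≥0∞)) x ∂(lamG u) :=
              lintegral_congr_ae (hae.mono fun x hx => by simp only [hx])
          _ = γp u A * ∫⁻ x, V.indicator (fun _ => (Cq : ℝ≥0∞)) x ∂(lamG u) :=
              lintegral_const_mul _ (measurable_const.indicator hV)
          _ = γp u A * (Cq * lamG u V) := by rw [lintegral_indicator_const hV]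
          _ ≤ γp u A * (Cq * Cl) :=
              mul_le_mul_right (mul_le_mul_right (hCl u) _) _
    _ = (Cq * Cl) * ∫⁻ u, γp u A ∂μG0 := by
        rw [← lintegral_const_mul _ (γp.measurable_coe hA)]
        simp [mul_comm]
    _ = ↑(Cl * Cq) * μS0 A := by
        rw [hμS0 A hA, ENNReal.coe_mul]
        ring
end

section
/- Let S₀, T₀, G, G₀ be topological spaces with their Borel σ-algebras and Borel maps p : S₀ → G₀, q : T₀ → G₀, r, d : G → G₀. Let γ_p (from G₀ to S₀), γ_q (from G₀ to T₀) and λ_G (from G₀ to G) be s-finite kernels, with γ_p^u concentrated on p⁻¹{u}, γ_q^u concentrated on q⁻¹{u} and λ_G^u concentrated on r⁻¹{u} for every u, and with γ_p and λ_G locally bounded (every point of the target space has an open neighborhood U and a constant C such that the kernel measure of U is at most C for all parameters u ∈ G₀). Let μ_G⁰ be a measure on G₀, set μ_G = ∫ λ_G^u dμ_G⁰(u), μ_T⁰ = ∫ γ_q^u dμ_G⁰(u), and μ_P⁰(E) = ∫_G (γ_p^{r(x)} ⊗ δ_x ⊗ γ_q^{d(x)})(E) dμ_G(x) on S₀ ×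 G × T₀. Assume there exist a continuous involution ι : G → G (ι ∘ ι = id) with r ∘ ι = d, and a measurable function w : G → (0, ∞) with ι_*μ_G = μ_G.withDensity w, such that w is locally bounded above (every point of G has an open neighborhood on which w is bounded by a constant). Then for every compact set K ⊆ S₀ × G × T₀ there exists a constant D_K ≥ 0 such that for every Borel set Ω ⊆ T₀: μ_P⁰(K ∩ (S₀ × G × Ω)) ≤ D_K · μ_T⁰(Ω). -/
open MeasureTheory ProbabilityTheory Set
open scoped ENNReal NNReal

/-- From a pointwise local bound on a family of measures, get a uniform bound on an
open neighborhood of a compact set. -/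
lemma exists_open_superset_bound {X P : Type*} [TopologicalSpace X] [MeasurableSpace X]
    (κ : P → Measure X) {L : Set X} (hL : IsCompact L)
    (h : ∀ x : X, ∃ U : Set X, IsOpen U ∧ x ∈ U ∧ ∃ C : ℝ≥0, ∀ u, κ u U ≤ C) :
    ∃ U : Set X, IsOpen U ∧ L ⊆ U ∧ ∃ C : ℝ≥0, ∀ u, κ u U ≤ C := by
  choose U hUo hxU C hC using h
  obtain ⟨t, ht⟩ := hL.elim_finite_subcover U hUo (fun x hx => mem_iUnion.2 ⟨x, hxU x⟩)
  refine ⟨⋃ x ∈ t, U x, isOpen_biUnion (fun x _ => hUo x), ht, ∑ x ∈ t, C x, fun u => ?_⟩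
  calc κ u (⋃ x ∈ t, U x) ≤ ∑ x ∈ t, κ u (U x) := measure_biUnion_finset_le t U
    _ ≤ ∑ x ∈ t, (C x : ℝ≥0∞) := Finset.sum_le_sum fun x _ => hC x u
    _ = ((∑ x ∈ t, C x : ℝ≥0) : ℝ≥0∞) := by push_cast; rfl

/-- From a pointwise local bound on a function, get a uniform bound on an
open neighborhood of a compact set. -/
lemma exists_open_superset_bound_fun {X : Type*} [TopologicalSpace X]
    (w : X → ℝ≥0∞) {L : Set X} (hL : IsCompact L)
    (h : ∀ x : X, ∃ U : Set X, IsOpen U ∧ x ∈ U ∧ ∃ C : ℝ≥0, ∀ y ∈ U, w y ≤ C) :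
    ∃ U : Set X, IsOpen U ∧ L ⊆ U ∧ ∃ C : ℝ≥0, ∀ y ∈ U, w y ≤ C := by
  choose U hUo hxU C hC using h
  obtain ⟨t, ht⟩ := hL.elim_finite_subcover U hUo (fun x hx => mem_iUnion.2 ⟨x, hxU x⟩)
  refine ⟨⋃ x ∈ t, U x, isOpen_biUnion (fun x _ => hUo x), ht, ∑ x ∈ t, C x, fun y hy => ?_⟩
  obtain ⟨x, hxt, hyx⟩ := mem_iUnion₂.1 hy
  calc w y ≤ (C x : ℝ≥0∞) := hC x y hyx
    _ ≤ ((∑ x ∈ t, C x : ℝ≥0) : ℝ≥0∞) := by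
        exact_mod_cast Finset.single_le_sum (f := C) (fun i _ => zero_le) hxt

/-- Proposition 6.4 (π_T-half): under the local boundedness of the modular density
`w` (the Radon–Nikodym derivative of `ι_*μ_G` with respect to `μ_G`), the
domination inequality `μ_P⁰(K ∩ π_T⁻¹(Ω)) ≤ D_K μ_T⁰(Ω)` holds for compact `K`
and Borel `Ω`. -/
theorem stmt_16 {S₀ T₀ G G₀ : Type*}
    [TopologicalSpace S₀] [MeasurableSpace S₀] [BorelSpace S₀]
    [TopologicalSpace T₀] [MeasurableSpace T₀] [BorelSpace T₀]
    [TopologicalSpace G] [MeasurableSpace G] [BorelSpace G]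
    [TopologicalSpace G₀] [MeasurableSpace G₀] [BorelSpace G₀]
    (p : S₀ → G₀) (q : T₀ → G₀) (r d : G → G₀)
    (hp : Measurable p) (hq : Measurable q) (hr : Measurable r) (hd : Measurable d)
    (γp : Kernel G₀ S₀) (γq : Kernel G₀ T₀) (lamG : Kernel G₀ G)
    [IsSFiniteKernel γp] [IsSFiniteKernel γq] [IsSFiniteKernel lamG]
    (hγp : ∀ u, γp u ((p ⁻¹' {u})ᶜ) = 0)
    (hγq : ∀ u, γq u ((q ⁻¹' {u})ᶜ) = 0)
    (hlamG : ∀ u, lamG u ((r ⁻¹' {u})ᶜ) = 0)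
    (hγplb : ∀ s : S₀, ∃ U : Set S₀, IsOpen U ∧ s ∈ U ∧ ∃ C : ℝ≥0, ∀ u, γp u U ≤ C)
    (hlamGlb : ∀ x : G, ∃ U : Set G, IsOpen U ∧ x ∈ U ∧ ∃ C : ℝ≥0, ∀ u, lamG u U ≤ C)
    (μG0 : Measure G₀) (μG : Measure G) (μT0 : Measure T₀)
    (μP0 : Measure (S₀ × G × T₀))
    (hμG : ∀ E : Set G, MeasurableSet E → μG E = ∫⁻ u, lamG u E ∂μG0)
    (hμT0 : ∀ E : Set T₀, MeasurableSet E → μT0 E = ∫⁻ u, γq u E ∂μG0)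
    (hμP0 : ∀ E : Set (S₀ × G × T₀), MeasurableSet E →
      μP0 E = ∫⁻ x, ((γp (r x)).prod ((Measure.dirac x).prod (γq (d x)))) E ∂μG)
    (ι : G → G) (hι : Continuous ι) (hinv : ι ∘ ι = id) (hrι : r ∘ ι = d)
    (w : G → ℝ≥0∞) (hw : Measurable w)
    (hwpos : ∀ x, 0 < w x) (hwfin : ∀ x, w x < ∞)
    (hmap : μG.map ι = μG.withDensity w)
    (hwlb : ∀ x : G, ∃ U : Set G, IsOpen U ∧ x ∈ U ∧ ∃ C : ℝ≥0, ∀ y ∈ U, w y ≤ C) :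
    ∀ K : Set (S₀ × G × T₀), IsCompact K → ∃ D : ℝ≥0,
      ∀ Ω : Set T₀, MeasurableSet Ω →
        μP0 (K ∩ ((univ : Set S₀) ×ˢ ((univ : Set G) ×ˢ Ω))) ≤ D * μT0 Ω := by
  intro K hK
  have hιι : ∀ x, ι (ι x) = x := fun x => congrFun hinv x
  have hdι : ∀ x, d (ι x) = r x := by
    intro x
    have := congrFun hrι (ι x)
    simpa [Function.comp, hιι] using this.symm
  -- compact projections
  have hKS : IsCompact (Prod.fst '' K) := hK.image continuous_fst
  have hKG : IsCompact ((fun z : S₀ × G × T₀ => z.2.1) '' K) :=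
    hK.image (continuous_fst.comp continuous_snd)
  set KS := Prod.fst '' K with hKSdef
  set KG := (fun z : S₀ × G × T₀ => z.2.1) '' K with hKGdef
  have hL : IsCompact (KG ∪ ι '' KG) := hKG.union (hKG.image hι)
  obtain ⟨U, hUo, hKSU, CS, hCS⟩ := exists_open_superset_bound (fun u => γp u) hKS hγplb
  obtain ⟨V₀, hV₀o, hLV₀, CG, hCG⟩ := exists_open_superset_bound (fun u => lamG u) hL hlamGlb
  obtain ⟨W, hWo, hLW, Cw, hCw⟩ := exists_open_superset_bound_fun w hL hwlb
  set V : Set G := V₀ ∩ ι ⁻¹' V₀ ∩ ι ⁻¹' W with hVdef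
  have hVo : IsOpen V := ((hV₀o.inter (hV₀o.preimage hι)).inter (hWo.preimage hι))
  have hKGV : KG ⊆ V := by
    intro x hx
    refine ⟨⟨hLV₀ (Or.inl hx), hLV₀ (Or.inr ⟨x, hx, rfl⟩)⟩, hLW (Or.inr ⟨x, hx, rfl⟩)⟩
  have hιVW : ι ⁻¹' V ⊆ W := by
    intro x hx
    have : ι (ι x) ∈ W := hx.2
    rwa [hιι] at this
  have hιVV₀ : ι ⁻¹' V ⊆ V₀ := by
    intro x hx
    have : ι (ι x) ∈ V₀ := hx.1.2
    rwa [hιι] at this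
  refine ⟨CS * Cw * CG, fun Ω hΩ => ?_⟩
  -- measurable pieces
  have hVm : MeasurableSet V := hVo.measurableSet
  have hιVm : MeasurableSet (ι ⁻¹' V) := (hVo.preimage hι).measurableSet
  have hE : MeasurableSet (U ×ˢ V ×ˢ Ω) :=
    hUo.measurableSet.prod (hVm.prod hΩ)
  have hsub : K ∩ ((univ : Set S₀) ×ˢ ((univ : Set G) ×ˢ Ω)) ⊆ U ×ˢ V ×ˢ Ω := by
    rintro ⟨s, x, t⟩ ⟨hkK, hmem⟩
    simp only [mem_prod, mem_univ, true_and] at hmem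
    exact ⟨hKSU ⟨_, hkK, rfl⟩, hKGV ⟨_, hkK, rfl⟩, hmem⟩
  -- functions
  set g : G → ℝ≥0∞ := V.indicator (fun y => γq (d y) Ω) with hgdef
  set h : G → ℝ≥0∞ := (ι ⁻¹' V).indicator (fun y => γq (r y) Ω) with hhdef
  have hgm : Measurable g := ((γq.measurable_coe hΩ).comp hd).indicator hVm
  have hhm : Measurable h := ((γq.measurable_coe hΩ).comp hr).indicator hιVm
  have hgι : ∀ x, g (ι x) = h x := by
    intro x
    simp only [hgdef, hhdef, indicator, mem_preimage]
    by_cases hx : ι x ∈ V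
    · simp [hx, hdι]
    · simp [hx]
  -- step 1: bound the integrand
  have step1 : μP0 (K ∩ ((univ : Set S₀) ×ˢ ((univ : Set G) ×ˢ Ω)))
      ≤ (CS : ℝ≥0∞) * ∫⁻ x, g x ∂μG := by
    calc μP0 (K ∩ ((univ : Set S₀) ×ˢ ((univ : Set G) ×ˢ Ω)))
        ≤ μP0 (U ×ˢ V ×ˢ Ω) := measure_mono hsub
      _ = ∫⁻ x, ((γp (r x)).prod ((Measure.dirac x).prod (γq (d x)))) (U ×ˢ V ×ˢ Ω) ∂μG :=
          hμP0 _ hE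
      _ ≤ ∫⁻ x, (CS : ℝ≥0∞) * g x ∂μG := by
          refine lintegral_mono fun x => ?_
          rw [Measure.prod_prod, Measure.prod_prod, Measure.dirac_apply' _ hVm]
          by_cases hx : x ∈ V
          · rw [hgdef, indicator_of_mem hx, indicator_of_mem hx]
            simp only [Pi.one_apply, one_mul]
            exact mul_le_mul_left (hCS (r x)) _
          · rw [hgdef, indicator_of_notMem hx, indicator_of_notMem hx]
            simp
      _ = (CS : ℝ≥0∞) * ∫⁻ x, g x ∂μG := lintegral_const_mul _ hgm
  -- step 2: the substitution x ↦ ι x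
  have step2 : ∫⁻ x, g x ∂μG = ∫⁻ x, w x * h x ∂μG := by
    calc ∫⁻ x, g x ∂μG = ∫⁻ x, g (ι (ι x)) ∂μG := by simp [hιι]
      _ = ∫⁻ x, g (ι x) ∂(μG.map ι) :=
          (lintegral_map (hgm.comp hι.measurable) hι.measurable).symm
      _ = ∫⁻ x, g (ι x) ∂(μG.withDensity w) := by rw [hmap]
      _ = ∫⁻ x, w x * g (ι x) ∂μG :=
          lintegral_withDensity_eq_lintegral_mul μG hw (hgm.comp hι.measurable)
      _ = ∫⁻ x, w x * h x ∂μG := by simp only [hgι]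
  -- step 3: bound w on ι⁻¹ V
  have step3 : ∫⁻ x, w x * h x ∂μG ≤ (Cw : ℝ≥0∞) * ∫⁻ x, h x ∂μG := by
    rw [← lintegral_const_mul _ hhm]
    refine lintegral_mono fun x => ?_
    by_cases hx : x ∈ ι ⁻¹' V
    · rw [hhdef, indicator_of_mem hx]
      exact mul_le_mul_left (hCw x (hιVW hx)) _
    · rw [hhdef, indicator_of_notMem hx]
      simp
  -- step 4: disintegrate μG along lamG
  have hbind : μG = μG0.bind (fun u => lamG u) := by
    refine Measure.ext fun E hE => ?_
    rw [hμG E hE, Measure.bind_apply hE lamG.measurable.aemeasurable]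
  have step4 : ∫⁻ x, h x ∂μG = ∫⁻ u, ∫⁻ x, h x ∂(lamG u) ∂μG0 := by
    rw [hbind, Measure.lintegral_bind lamG.measurable.aemeasurable hhm.aemeasurable]
  -- step 5: for each u, the inner integral
  have step5 : ∀ u, ∫⁻ x, h x ∂(lamG u) ≤ (CG : ℝ≥0∞) * γq u Ω := by
    intro u
    have hae : ∀ᵐ x ∂(lamG u), r x = u := by
      rw [ae_iff]
      exact hlamG u
    have : ∫⁻ x, h x ∂(lamG u)
        = ∫⁻ x, (ι ⁻¹' V).indicator (fun _ => γq u Ω) x ∂(lamG u) := by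
      refine lintegral_congr_ae ?_
      filter_upwards [hae] with x hx
      rw [hhdef]
      by_cases hxV : x ∈ ι ⁻¹' V
      · rw [indicator_of_mem hxV, indicator_of_mem hxV, hx]
      · rw [indicator_of_notMem hxV, indicator_of_notMem hxV]
    rw [this, lintegral_indicator_const hιVm]
    calc γq u Ω * lamG u (ι ⁻¹' V) ≤ γq u Ω * lamG u V₀ :=
          mul_le_mul_right (measure_mono hιVV₀) _
      _ ≤ γq u Ω * CG := mul_le_mul_right (hCG u) _
      _ = (CG : ℝ≥0∞) * γq u Ω := mul_comm _ _
  -- assemble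
  calc μP0 (K ∩ ((univ : Set S₀) ×ˢ ((univ : Set G) ×ˢ Ω)))
      ≤ (CS : ℝ≥0∞) * ∫⁻ x, g x ∂μG := step1
    _ = (CS : ℝ≥0∞) * ∫⁻ x, w x * h x ∂μG := by rw [step2]
    _ ≤ (CS : ℝ≥0∞) * ((Cw : ℝ≥0∞) * ∫⁻ x, h x ∂μG) := mul_le_mul_right step3 _
    _ = (CS : ℝ≥0∞) * ((Cw : ℝ≥0∞) * ∫⁻ u, ∫⁻ x, h x ∂(lamG u) ∂μG0) := by rw [step4]
    _ ≤ (CS : ℝ≥0∞) * ((Cw : ℝ≥0∞) * ∫⁻ u, (CG : ℝ≥0∞) * γq u Ω ∂μG0) := by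
        exact mul_le_mul_right (mul_le_mul_right (lintegral_mono fun u => step5 u) _) _
    _ = (CS : ℝ≥0∞) * ((Cw : ℝ≥0∞) * ((CG : ℝ≥0∞) * ∫⁻ u, γq u Ω ∂μG0)) := by
        rw [lintegral_const_mul _ (γq.measurable_coe hΩ)]
    _ = ((CS * Cw * CG : ℝ≥0) : ℝ≥0∞) * μT0 Ω := by
        rw [hμT0 Ω hΩ]; push_cast; ring
end
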